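/- Let f : X ⟶ Y be an integral morphism of schemes. If x and x' are points of the underlying space of X such that x specializes to x' (i.e., x' lies in the closure of {x}) and f(x) = f(x'), then x = x'. In other words, there are no nontrivial specializations within the fibres of an integral morphism. -/

import Mathlib

open AlgebraicGeometry

lemma spec_no_specialization {R S : CommRingCat} (φ : R ⟶ S) (hφ : RingHom.IsIntegral φ.hom)
    {p q : PrimeSpectrum S} (h : p ⤳ q)
    (he : PrimeSpectrum.comap φ.hom p = PrimeSpectrum.comap φ.hom q) : p = q := by
  letI := φ.hom.toAlgebra
  have hle : p.asIdeal ≤ q.asIdeal := (PrimeSpectrum.le_iff_specializes p q).mpr h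
  ext s
  refine ⟨fun hs => hle hs, fun hs => ?_⟩
  by_contra hsp
  have := Ideal.comap_lt_comap_of_integral_mem_sdiff (R := R) hle ⟨hs, hsp⟩ (hφ s)
  have : (PrimeSpectrum.comap φ.hom p).asIdeal < (PrimeSpectrum.comap φ.hom q).asIdeal := this
  rw [he] at this
  exact lt_irrefl _ this

/-- There are no nontrivial specializations in the fibres of an integral morphism of schemes:
if `f : X ⟶ Y` is integral, `x' ∈ closure {x}` and `f x = f x'`, then `x = x'`. -/
theorem stmt_2 {X Y : Scheme} (f : X ⟶ Y) [IsIntegralHom f] (x x' : X)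
    (h : x' ∈ closure ({x} : Set X)) (hf : f.base x = f.base x') :
    x = x' := by
  have hxx' : x ⤳ x' := specializes_iff_mem_closure.mpr h
  -- choose an affine open `U` containing `f x'`
  obtain ⟨y, hy⟩ : ∃ y, (Y.affineCover.f (Y.affineCover.idx (f.base x'))).base y = f.base x' :=
    Y.affineCover.covers _
  set U : Y.Opens := (Y.affineCover.f (Y.affineCover.idx (f.base x'))).opensRange with hU_def
  have hU : IsAffineOpen U := isAffineOpen_opensRange _
  have hfx'U : f.base x' ∈ U := ⟨y, hy⟩
  have hfxU : f.base x ∈ U := hf ▸ hfx'U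
  set V : X.Opens := f ⁻¹ᵁ U with hV_def
  have hxV : x ∈ V := hfxU
  have hx'V : x' ∈ V := hfx'U
  -- restrict f to U
  set g := f ∣_ U with hg_def
  have hgint : IsIntegralHom g := inferInstanceAs (IsIntegralHom (f ∣_ U))
  haveI : IsAffine U.toScheme := hU
  obtain ⟨hXV, hint⟩ := (IsIntegralHom.hasAffineProperty.iff_of_isAffine (P := @IsIntegralHom) (f := g)).mp hgint
  haveI : IsAffine V.toScheme := hXV
  set xV : V.toScheme := ⟨x, hxV⟩
  set x'V : V.toScheme := ⟨x', hx'V⟩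
  have hspec : xV ⤳ x'V := (subtype_specializes_iff xV x'V).mpr hxx'
  have hgeq : g.base xV = g.base x'V := by
    apply Subtype.ext
    have h1 := congrFun (morphismRestrict_base f U) xV
    have h2 := congrFun (morphismRestrict_base f U) x'V
    simp only [Set.restrictPreimage_coe] at h1 h2
    rw [hg_def, h1, h2]
    exact hf
  -- transfer to Spec
  have hnat := Scheme.isoSpec_hom_naturality g
  set p := V.toScheme.isoSpec.hom.base xV
  set q := V.toScheme.isoSpec.hom.base x'V
  have hpq : p ⤳ q := hspec.map V.toScheme.isoSpec.hom.base.hom.continuous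
  have hcomap : (Spec.map g.appTop).base p = (Spec.map g.appTop).base q := by
    have h1 : ∀ z, (Spec.map g.appTop).base (V.toScheme.isoSpec.hom.base z)
        = U.toScheme.isoSpec.hom.base (g.base z) := fun z => by
      rw [← Scheme.Hom.comp_apply, hnat, Scheme.Hom.comp_apply]
    rw [h1, h1, hgeq]
  have : p = q := spec_no_specialization g.appTop hint hpq (by
    have : (⇑(Spec.map g.appTop).base : _ → _) = PrimeSpectrum.comap g.appTop.hom := rfl
    rw [← this]; exact hcomap)
  have hxVeq : xV = x'V := by
    have hinj : Function.Injective V.toScheme.isoSpec.hom.base := by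
      intro a b hab
      have h2 := congrArg (V.toScheme.isoSpec.inv.base) hab
      rw [← Scheme.Hom.comp_apply, ← Scheme.Hom.comp_apply, CategoryTheory.Iso.hom_inv_id] at h2
      simpa using h2
    exact hinj this
  exact congrArg Subtype.val hxVeq
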